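/- Let (Aₙ) be a sequence of nonnegative real-valued random variables and (Fₙ) a sequence of σ-algebras on a common probability space. If the conditional expectations E[Aₙ | Fₙ] converge to 0 in probability, then Aₙ converges to 0 in probability. -/

import Mathlib

open MeasureTheory Filter
open scoped ENNReal

/-- If the conditional expectations `E[Aₙ | Fₙ]` of nonnegative random variables
converge to 0 in probability, then `Aₙ → 0` in probability. -/
theorem stmt1 {Ω : Type*} {m0 : MeasurableSpace Ω} (μ : Measure Ω) [IsProbabilityMeasure μ]
    (F : ℕ → MeasurableSpace Ω) (hF : ∀ n, F n ≤ m0)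
    (A : ℕ → Ω → ℝ) (hAmeas : ∀ n, Measurable (A n)) (hAnn : ∀ n ω, 0 ≤ A n ω)
    (hAint : ∀ n, Integrable (A n) μ)
    (h : TendstoInMeasure μ (fun n => μ[A n | F n]) atTop (0 : Ω → ℝ)) :
    TendstoInMeasure μ A atTop (0 : Ω → ℝ) := by
  rw [tendstoInMeasure_iff_dist] at h ⊢
  intro ε hε
  rw [ENNReal.tendsto_nhds_zero]
  intro δ hδ
  set δ' : ℝ≥0∞ := min δ 1 with hδ'def
  have hδ'pos : 0 < δ' := lt_min hδ zero_lt_one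
  have hδ'ne : δ' ≠ ⊤ := ne_top_of_le_ne_top ENNReal.one_ne_top (min_le_right _ _)
  have hδ'topos : 0 < δ'.toReal := ENNReal.toReal_pos hδ'pos.ne' hδ'ne
  set η : ℝ := ε * δ'.toReal / 2 with hηdef
  have hη : 0 < η := by positivity
  -- eventually the condexp tail is small
  have hev : ∀ᶠ n in atTop,
      μ {ω | η ≤ dist ((μ[A n | F n]) ω) ((0 : Ω → ℝ) ω)} < δ' / 2 := by
    refine (h η hη).eventually_lt_const ?_
    exact ENNReal.div_pos hδ'pos.ne' ENNReal.ofNat_ne_top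
  filter_upwards [hev] with n hn
  set g : Ω → ℝ := μ[A n | F n] with hg
  set B : Set Ω := {ω | g ω < η} with hB
  have hBFn : MeasurableSet[F n] B := by
    have := (stronglyMeasurable_condExp (m := F n) (f := A n) (μ := μ)).measurable
      (measurableSet_Iio (a := η))
    simpa [hB, hg, Set.preimage, Set.mem_Iio] using this
  have hBmeas : MeasurableSet B := hF n _ hBFn
  set T : Set Ω := {ω | η ≤ dist (g ω) ((0 : Ω → ℝ) ω)} with hT
  -- Markov on B
  have hMarkov : ε * (μ.restrict B {ω | ε ≤ A n ω}).toReal ≤ ∫ ω in B, A n ω ∂μ :=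
    mul_meas_ge_le_integral_of_nonneg (ae_of_all _ (hAnn n)) ((hAint n).restrict) ε
  have hint_eq : ∫ ω in B, A n ω ∂μ = ∫ ω in B, g ω ∂μ :=
    (setIntegral_condExp (hF n) (hAint n) hBFn).symm
  have hBle : ∫ ω in B, g ω ∂μ ≤ η * (μ B).toReal := by
    have h1 : ∫ ω in B, g ω ∂μ ≤ ∫ _ω in B, η ∂μ := by
      refine setIntegral_mono_on (integrable_condExp.integrableOn)
        (integrableOn_const (measure_lt_top _ _).ne) hBmeas ?_
      intro ω hω
      exact le_of_lt hω
    simpa [mul_comm, Measure.real] using h1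
  have hmuB : (μ B).toReal ≤ 1 := by
    have := prob_le_one (μ := μ) (s := B)
    simpa using ENNReal.toReal_le_of_le_ofReal zero_le_one (by simpa using this)
  have hS : (μ.restrict B {ω | ε ≤ A n ω}).toReal ≤ η / ε := by
    rw [div_eq_inv_mul, ← mul_le_mul_iff_right₀ hε, ← mul_assoc, mul_inv_cancel₀ hε.ne', one_mul]
    calc ε * (μ.restrict B {ω | ε ≤ A n ω}).toReal ≤ ∫ ω in B, A n ω ∂μ := hMarkov
      _ = ∫ ω in B, g ω ∂μ := hint_eq
      _ ≤ η * (μ B).toReal := hBle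
      _ ≤ η := by nlinarith
  have hSfin : μ.restrict B {ω | ε ≤ A n ω} ≠ ⊤ := (measure_lt_top _ _).ne
  have hS' : μ ({ω | ε ≤ A n ω} ∩ B) ≤ ENNReal.ofReal (η / ε) := by
    rw [← Measure.restrict_apply₀' hBmeas.nullMeasurableSet]
    rw [← ENNReal.ofReal_toReal hSfin]
    exact ENNReal.ofReal_le_ofReal hS
  have hηε : ENNReal.ofReal (η / ε) = δ' / 2 := by
    have : η / ε = δ'.toReal / 2 := by field_simp [hηdef]; ring
    rw [this, ENNReal.ofReal_div_of_pos zero_lt_two, ENNReal.ofReal_toReal hδ'ne]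
    norm_num
  -- split
  have hsplit : {ω | ε ≤ dist (A n ω) ((0 : Ω → ℝ) ω)} ⊆ ({ω | ε ≤ A n ω} ∩ B) ∪ T := by
    intro ω hω
    simp only [Real.dist_eq, Pi.zero_apply, sub_zero, Set.mem_setOf_eq,
      abs_of_nonneg (hAnn n ω)] at hω
    by_cases hωB : ω ∈ B
    · exact Or.inl ⟨hω, hωB⟩
    · refine Or.inr ?_
      simp only [hB, Set.mem_setOf_eq, not_lt] at hωB
      simp only [hT, Real.dist_eq, Pi.zero_apply, sub_zero, Set.mem_setOf_eq]
      exact hωB.trans (le_abs_self _)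
  calc μ {ω | ε ≤ dist (A n ω) ((0 : Ω → ℝ) ω)}
      ≤ μ (({ω | ε ≤ A n ω} ∩ B) ∪ T) := measure_mono hsplit
    _ ≤ μ ({ω | ε ≤ A n ω} ∩ B) + μ T := measure_union_le _ _
    _ ≤ δ' / 2 + δ' / 2 := add_le_add (hηε ▸ hS') hn.le
    _ = δ' := ENNReal.add_halves _
    _ ≤ δ := min_le_left _ _
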